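/- Let m, n, l be integers with l ≥ 0, m ≥ l + 2, and n − 2 > 2·3^l. Then Σ¹_even(m, n, l) > Σ²_even(m, n, l). -/

import Mathlib

def Sigma1Even (m n l : ℕ) : ℕ :=
  ∑ r ∈ Finset.range (l / 2 + 1),
    (Nat.choose l (2 * r) * 2 ^ (2 * r + 1) * (n - 2) ^ (m - (2 * r + 1)) +
      Nat.choose l (2 * r + 1) * 2 ^ (m - l + (2 * r + 1)) * (n - 2) ^ (l - (2 * r + 1)))

def Sigma2Even (m n l : ℕ) : ℕ :=
  ∑ r ∈ Finset.range (l / 2 + 1),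
    (Nat.choose l (2 * r) * 2 ^ (2 * r + 2) * (n - 2) ^ (m - (2 * r + 2)) +
      Nat.choose l (2 * r + 1) * 2 ^ (2 * r + 1) * (n - 2) ^ (m - (2 * r + 2)))

def Sigma1Odd (m n l : ℕ) : ℕ :=
  ∑ r ∈ Finset.range (l / 2 + 1),
    (Nat.choose l (2 * r) * (n - 2) ^ (m - (2 * r + 1)) +
      Nat.choose l (2 * r + 1) * (n - 2) ^ (l - (2 * r + 1)))

def Sigma2Odd (m n l : ℕ) : ℕ :=
  ∑ r ∈ Finset.range (l / 2 + 1),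
    (Nat.choose l (2 * r) * (n - 2) ^ (m - (2 * r + 2)) +
      Nat.choose l (2 * r + 1) * (n - 2) ^ (m - (2 * r + 2)))

private lemma pair_sum (f : ℕ → ℕ) (k : ℕ) :
    ∑ r ∈ Finset.range k, (f (2 * r) + f (2 * r + 1)) = ∑ j ∈ Finset.range (2 * k), f j := by
  induction k with
  | zero => simp
  | succ k ih =>
    rw [Finset.sum_range_succ, ih, Nat.mul_succ]
    rw [show 2 * k + 2 = (2 * k + 1) + 1 from rfl, Finset.sum_range_succ, Finset.sum_range_succ]
    ring

private lemma binom_pow (l : ℕ) :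
    ∑ r ∈ Finset.range (l / 2 + 1),
      (Nat.choose l (2 * r) * 2 ^ (2 * r) + Nat.choose l (2 * r + 1) * 2 ^ (2 * r + 1))
      = 3 ^ l := by
  rw [pair_sum (fun j => Nat.choose l j * 2 ^ j)]
  have hsub : Finset.range (l + 1) ⊆ Finset.range (2 * (l / 2 + 1)) := by
    apply Finset.range_subset_range.2; omega
  rw [← Finset.sum_subset hsub (by
    intro j hj hj2
    simp only [Finset.mem_range] at hj hj2
    rw [Nat.choose_eq_zero_of_lt (by omega), zero_mul])]
  have := add_pow (2 : ℕ) 1 l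
  simp only [one_pow, mul_one] at this
  norm_num at this
  rw [this]
  exact Finset.sum_congr rfl fun j _ => mul_comm _ _

theorem stmt_16 (m n l : ℕ) (hm : l + 2 ≤ m) (hn : 2 * 3 ^ l < n - 2) :
    Sigma1Even m n l > Sigma2Even m n l := by
  set d := n - 2 with hd
  have h3 : 1 ≤ 3 ^ l := Nat.one_le_pow _ _ (by norm_num)
  have hd1 : 1 ≤ d := by omega
  -- Lower bound for Sigma1Even
  have hA : 2 * d ^ (m - 1) ≤ Sigma1Even m n l := by
    have h0 : (0 : ℕ) ∈ Finset.range (l / 2 + 1) := by simp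
    have := Finset.single_le_sum
      (f := fun r => Nat.choose l (2 * r) * 2 ^ (2 * r + 1) * d ^ (m - (2 * r + 1)) +
        Nat.choose l (2 * r + 1) * 2 ^ (m - l + (2 * r + 1)) * d ^ (l - (2 * r + 1)))
      (fun i _ => Nat.zero_le _) h0
    simp only [mul_zero, Nat.choose_zero_right, one_mul, pow_one] at this
    calc 2 * d ^ (m - 1) ≤ 2 * d ^ (m - (0 + 1)) +
          Nat.choose l (0 + 1) * 2 ^ (m - l + (0 + 1)) * d ^ (l - (0 + 1)) := by
            simp
      _ ≤ Sigma1Even m n l := this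
  -- Upper bound for Sigma2Even
  have hB : Sigma2Even m n l ≤ 4 * 3 ^ l * d ^ (m - 2) := by
    have hstep : Sigma2Even m n l ≤ ∑ r ∈ Finset.range (l / 2 + 1),
        4 * (Nat.choose l (2 * r) * 2 ^ (2 * r) + Nat.choose l (2 * r + 1) * 2 ^ (2 * r + 1))
          * d ^ (m - 2) := by
      apply Finset.sum_le_sum
      intro r _
      have hde : d ^ (m - (2 * r + 2)) ≤ d ^ (m - 2) :=
        Nat.pow_le_pow_right hd1 (by omega)
      have h1 : Nat.choose l (2 * r) * 2 ^ (2 * r + 2) * d ^ (m - (2 * r + 2)) ≤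
          4 * (Nat.choose l (2 * r) * 2 ^ (2 * r)) * d ^ (m - 2) := by
        apply Nat.mul_le_mul _ hde
        rw [pow_add]; ring_nf; omega
      have h2 : Nat.choose l (2 * r + 1) * 2 ^ (2 * r + 1) * d ^ (m - (2 * r + 2)) ≤
          4 * (Nat.choose l (2 * r + 1) * 2 ^ (2 * r + 1)) * d ^ (m - 2) := by
        apply Nat.mul_le_mul _ hde
        nlinarith [Nat.zero_le (Nat.choose l (2 * r + 1) * 2 ^ (2 * r + 1))]
      calc Nat.choose l (2 * r) * 2 ^ (2 * r + 2) * d ^ (m - (2 * r + 2)) +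
            Nat.choose l (2 * r + 1) * 2 ^ (2 * r + 1) * d ^ (m - (2 * r + 2))
          ≤ 4 * (Nat.choose l (2 * r) * 2 ^ (2 * r)) * d ^ (m - 2) +
            4 * (Nat.choose l (2 * r + 1) * 2 ^ (2 * r + 1)) * d ^ (m - 2) :=
            Nat.add_le_add h1 h2
        _ = 4 * (Nat.choose l (2 * r) * 2 ^ (2 * r) + Nat.choose l (2 * r + 1) * 2 ^ (2 * r + 1))
              * d ^ (m - 2) := by ring
    calc Sigma2Even m n l ≤ _ := hstep
      _ = 4 * (∑ r ∈ Finset.range (l / 2 + 1),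
            (Nat.choose l (2 * r) * 2 ^ (2 * r) + Nat.choose l (2 * r + 1) * 2 ^ (2 * r + 1)))
            * d ^ (m - 2) := by
          rw [Finset.mul_sum, Finset.sum_mul]
      _ = 4 * 3 ^ l * d ^ (m - 2) := by rw [binom_pow]
  -- Combine
  have hdp : 0 < d ^ (m - 2) := pow_pos (by omega) _
  have hkey : 4 * 3 ^ l * d ^ (m - 2) < 2 * d ^ (m - 1) := by
    have hm1 : m - 1 = (m - 2) + 1 := by omega
    rw [hm1, pow_succ]
    have : 4 * 3 ^ l < 2 * d := by omega
    calc 4 * 3 ^ l * d ^ (m - 2) < 2 * d * d ^ (m - 2) :=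
          Nat.mul_lt_mul_of_lt_of_le this le_rfl hdp
      _ = 2 * (d ^ (m - 2) * d) := by ring
  omega
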